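/- Let X ⊂ ℝⁿ be a finite set of points and G ⊂ ℝ[x₁,…,xₙ] a set of polynomials generating the vanishing ideal I(X). Fix a positive integer t and suppose that every polynomial in I(X) of total degree at most t lies in the ideal generated by the elements of G of degree at most t. Then for any g ∈ I(X) of total degree at most t+1, if all partial derivatives ∂g/∂x_k (k = 1,…,n) vanish at every point of X, then g lies in the ideal generated by the elements of G of degree at most t. -/

import Mathlib

open MvPolynomial

lemma coeff_pderiv_aux {n : ℕ} (k : Fin n) (m : Fin n →₀ ℕ) (p : MvPolynomial (Fin n) ℝ) :
    MvPolynomial.coeff m (MvPolynomial.pderiv k p)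
      = ((m k : ℝ) + 1) * MvPolynomial.coeff (m + Finsupp.single k 1) p := by
  induction p using MvPolynomial.induction_on' with
  | add p q hp hq =>
    simp [hp, hq, mul_add]
  | monomial s a =>
    rw [pderiv_monomial, coeff_monomial, coeff_monomial]
    by_cases hs : s k = 0
    · have hz : (a * (s k : ℝ)) = 0 := by rw [hs]; simp
      rw [hz, ite_self]
      rw [if_neg, mul_zero]
      intro h
      have := DFunLike.congr_fun h k
      simp [Finsupp.single_apply, hs] at this
    · have hle : Finsupp.single k 1 ≤ s :=
        Finsupp.single_le_iff.mpr (Nat.one_le_iff_ne_zero.mpr hs)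
      by_cases h : s = m + Finsupp.single k 1
      · have hm : s - Finsupp.single k 1 = m := by
          rw [h, add_tsub_cancel_right]
        rw [if_pos hm, if_pos h]
        have hsk : s k = m k + 1 := by
          have := DFunLike.congr_fun h k
          simpa using this
        rw [hsk]
        push_cast
        ring
      · rw [if_neg, if_neg h, mul_zero]
        intro hm
        exact h (by rw [← hm, tsub_add_cancel_of_le hle])

lemma coeff_X_mul_pderiv {n : ℕ} (k : Fin n) (m : Fin n →₀ ℕ) (p : MvPolynomial (Fin n) ℝ) :
    MvPolynomial.coeff m (MvPolynomial.X k * MvPolynomial.pderiv k p)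
      = (m k : ℝ) * MvPolynomial.coeff m p := by
  classical
  rw [coeff_X_mul']
  by_cases hk : k ∈ m.support
  · rw [if_pos hk, coeff_pderiv_aux]
    have hmk : m k ≠ 0 := Finsupp.mem_support_iff.mp hk
    have hle : Finsupp.single k 1 ≤ m :=
      Finsupp.single_le_iff.mpr (Nat.one_le_iff_ne_zero.mpr hmk)
    have h1 : (m - Finsupp.single k 1) + Finsupp.single k 1 = m :=
      tsub_add_cancel_of_le hle
    have h2 : ((m - Finsupp.single k 1) : Fin n →₀ ℕ) k = m k - 1 := by
      rw [Finsupp.tsub_apply, Finsupp.single_eq_same]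
    rw [h1, h2]
    congr 1
    have : 1 ≤ m k := Nat.one_le_iff_ne_zero.mpr hmk
    push_cast [this]
    ring
  · rw [if_neg hk]
    have : m k = 0 := by simpa using Finsupp.notMem_support_iff.mp hk
    rw [this]
    simp

theorem stmt_1 (n : ℕ) (X : Finset (Fin n → ℝ)) (G : Set (MvPolynomial (Fin n) ℝ))
    (hgen : ∀ p : MvPolynomial (Fin n) ℝ,
      (∀ x ∈ X, MvPolynomial.eval x p = 0) ↔ p ∈ Ideal.span G)
    (t : ℕ) (ht : 0 < t)
    (hind : ∀ p : MvPolynomial (Fin n) ℝ, (∀ x ∈ X, MvPolynomial.eval x p = 0) →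
      p.totalDegree ≤ t →
      p ∈ Ideal.span {g' | g' ∈ G ∧ g'.totalDegree ≤ t})
    (g : MvPolynomial (Fin n) ℝ)
    (hgvan : ∀ x ∈ X, MvPolynomial.eval x g = 0)
    (hgdeg : g.totalDegree ≤ t + 1)
    (hgrad : ∀ k : Fin n, ∀ x ∈ X, MvPolynomial.eval x (MvPolynomial.pderiv k g) = 0) :
    g ∈ Ideal.span {g' | g' ∈ G ∧ g'.totalDegree ≤ t} := by
  classical
  set I := Ideal.span {g' | g' ∈ G ∧ g'.totalDegree ≤ t} with hI
  -- each exponent in the support of g has weight ≤ t+1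
  have hle : ∀ m ∈ g.support, (m.sum fun _ e => e) ≤ t + 1 :=
    fun m hm => (MvPolynomial.le_totalDegree hm).trans hgdeg
  -- total degree of each partial derivative is ≤ t
  have hpdeg : ∀ k : Fin n, (MvPolynomial.pderiv k g).totalDegree ≤ t := by
    intro k
    apply Finset.sup_le
    intro m hm
    have hc : MvPolynomial.coeff m (MvPolynomial.pderiv k g) ≠ 0 :=
      MvPolynomial.mem_support_iff.mp hm
    rw [coeff_pderiv_aux] at hc
    have hc2 : MvPolynomial.coeff (m + Finsupp.single k 1) g ≠ 0 := by
      intro h; rw [h, mul_zero] at hc; exact hc rfl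
    have := hle _ (MvPolynomial.mem_support_iff.mpr hc2)
    rw [Finsupp.sum_add_index (by simp) (by simp)] at this
    have hs : ((Finsupp.single k 1).sum fun _ e => e) = 1 := by simp
    omega
  -- the partial derivatives lie in I
  have hpmem : ∀ k : Fin n, MvPolynomial.pderiv k g ∈ I :=
    fun k => hind _ (hgrad k) (hpdeg k)
  -- define the auxiliary polynomial h
  set h : MvPolynomial (Fin n) ℝ :=
    ((t : ℝ) + 1) • g - ∑ k : Fin n, MvPolynomial.X k * MvPolynomial.pderiv k g with hh
  have hcoeff : ∀ m : Fin n →₀ ℕ, MvPolynomial.coeff m h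
      = (((t : ℝ) + 1) - (m.sum fun _ e => (e : ℝ))) * MvPolynomial.coeff m g := by
    intro m
    rw [hh, MvPolynomial.coeff_sub, MvPolynomial.coeff_smul, MvPolynomial.coeff_sum]
    simp only [coeff_X_mul_pderiv]
    rw [← Finset.sum_mul]
    have : (∑ k : Fin n, (m k : ℝ)) = m.sum fun _ e => (e : ℝ) := by
      rw [Finsupp.sum_fintype]
      simp
    rw [this, smul_eq_mul, sub_mul]
  -- h vanishes on X
  have hvan : ∀ x ∈ X, MvPolynomial.eval x h = 0 := by
    intro x hx
    rw [hh, smul_eq_C_mul]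
    simp [hgvan x hx, fun k => hgrad k x hx]
  -- h has total degree ≤ t
  have hhdeg : h.totalDegree ≤ t := by
    apply Finset.sup_le
    intro m hm
    have hc : MvPolynomial.coeff m h ≠ 0 := MvPolynomial.mem_support_iff.mp hm
    rw [hcoeff] at hc
    have hcg : MvPolynomial.coeff m g ≠ 0 := by
      intro h0; rw [h0, mul_zero] at hc; exact hc rfl
    have h1 : (m.sum fun _ e => e) ≤ t + 1 := hle _ (MvPolynomial.mem_support_iff.mpr hcg)
    by_contra hgt
    push_neg at hgt
    have heq : (m.sum fun _ e => e) = t + 1 := by omega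
    have hR : (m.sum fun _ e => (e : ℝ)) = (t : ℝ) + 1 := by
      have hcast : ((m.sum fun _ e => e : ℕ) : ℝ) = m.sum fun _ e => (e : ℝ) := by
        rw [Finsupp.sum, Finsupp.sum]
        push_cast
        rfl
      rw [← hcast, heq]
      push_cast
      ring
    rw [hR, sub_self, zero_mul] at hc
    exact hc rfl
  have hhmem : h ∈ I := hind _ hvan hhdeg
  have hsummem : (∑ k : Fin n, MvPolynomial.X k * MvPolynomial.pderiv k g) ∈ I :=
    Ideal.sum_mem _ fun k _ => Ideal.mul_mem_left _ _ (hpmem k)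
  have hsmul : ((t : ℝ) + 1) • g ∈ I := by
    have := Ideal.add_mem _ hhmem hsummem
    rwa [hh, sub_add_cancel] at this
  have hne : ((t : ℝ) + 1) ≠ 0 := by positivity
  have hfin : (((t : ℝ) + 1)⁻¹) • (((t : ℝ) + 1) • g) ∈ I :=
    Submodule.smul_of_tower_mem _ _ hsmul
  rwa [smul_smul, inv_mul_cancel₀ hne, one_smul] at hfin
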